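/- (Lemma 1) Let 𝒜 ∈ ℝ^{N×N} be strictly diagonally dominant with positive diagonal entries, let A_i ∈ ℝ^{N×N} for i = 1,…,N, let 𝒟 ⊂ {1,…,N}, 𝒟_k ⊂ {1,…,N}\{k} for k ∈ 𝒟, 𝒦_i = {k ∈ 𝒟 : i ∈ 𝒟_k}, 𝒱 = {i : 𝒦_i ≠ ∅}, and define Ā(δ) row-wise by [Ā(δ)]_{i:} = [𝒜]_{i:} + Σ_{k∈𝒦_i} δ_k [A_i]_{k:}. Let r = min over i ∈ 𝒱 of min( ([𝒜]_ii - Σ_{j≠i}|[𝒜]_ij|) / (Σ_{k∈𝒦_i} Σ_{j=1}^N |[A_i]_{kj}|), [𝒜]_ii / (Σ_{k∈𝒦_i} |[A_i]_{ki}|) ), interpreting p/q as +∞ if p > 0 and q = 0. Then for every δ ∈ ℝ^𝒟 with Euclidean norm |δ| < r, the matrix Ā(δ) is strictly diagonally dominant with positive diagonal entries, and consequently for every vector k ∈ ℝ^N with k_i > 0 for all i, the matrix -diag(k)·Ā(δ) is Hurwitz. -/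

import Mathlib

open Matrix Finset

/-- Lemma 1: Let `𝒜` be strictly diagonally dominant with positive diagonal,
and let `Ā(δ) i j = 𝒜 i j + ∑ k ∈ 𝒦 i, δ k * (A i) k j` be the perturbed pseudogradient
matrix. Let `r > 0` be as in Lemma 1, i.e., for every "victim" `i` (`𝒦 i ≠ ∅`),
`r ≤ (𝒜 i i - ∑_{j≠i}|𝒜 i j|) / (∑ k ∈ 𝒦 i, ∑ j, |A i k j|)` and
`r ≤ 𝒜 i i / (∑ k ∈ 𝒦 i, |A i k i|)` (stated multiplicatively so that `p/0 = ∞`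
imposes no constraint).  Then for every `δ` with Euclidean norm `|δ| < r`, the matrix
`Ā(δ)` is strictly diagonally dominant with positive diagonal entries, and consequently
for every `k` with positive entries, `-diag(k) * Ā(δ)` is Hurwitz. -/
theorem stmt4 (N : ℕ) (𝒜 : Matrix (Fin N) (Fin N) ℝ)
    (hdd : ∀ i, ∑ j ∈ Finset.univ.erase i, |𝒜 i j| < 𝒜 i i)
    (hpos : ∀ i, 0 < 𝒜 i i)
    (A : Fin N → Matrix (Fin N) (Fin N) ℝ)
    (𝒟 : Finset (Fin N)) (Dset : Fin N → Finset (Fin N))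
    (hD : ∀ k ∈ 𝒟, k ∉ Dset k)
    (𝒦 : Fin N → Finset (Fin N)) (h𝒦 : ∀ i, 𝒦 i = 𝒟.filter fun k => i ∈ Dset k)
    (Abar : (Fin N → ℝ) → Matrix (Fin N) (Fin N) ℝ)
    (hAbar : ∀ δ i j, Abar δ i j = 𝒜 i j + ∑ k ∈ 𝒦 i, δ k * A i k j)
    (r : ℝ) (hr : 0 < r)
    (hr1 : ∀ i, (𝒦 i).Nonempty →
      r * (∑ k ∈ 𝒦 i, ∑ j, |A i k j|) ≤ 𝒜 i i - ∑ j ∈ Finset.univ.erase i, |𝒜 i j|)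
    (hr2 : ∀ i, (𝒦 i).Nonempty → r * (∑ k ∈ 𝒦 i, |A i k i|) ≤ 𝒜 i i) :
    ∀ δ : Fin N → ℝ, Real.sqrt (∑ k ∈ 𝒟, δ k ^ 2) < r →
      (∀ i, ∑ j ∈ Finset.univ.erase i, |Abar δ i j| < Abar δ i i) ∧
      (∀ i, 0 < Abar δ i i) ∧
      (∀ k : Fin N → ℝ, (∀ i, 0 < k i) →
        ∀ μ ∈ spectrum ℂ
          ((-(Matrix.diagonal k * Abar δ)).map (Complex.ofReal : ℝ → ℂ)),
          μ.re < 0) := by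
  intro δ hδ
  set s : ℝ := Real.sqrt (∑ k ∈ 𝒟, δ k ^ 2) with hs
  have hs0 : 0 ≤ s := Real.sqrt_nonneg _
  have h𝒦D : ∀ i, 𝒦 i ⊆ 𝒟 := fun i => by rw [h𝒦]; exact Finset.filter_subset _ _
  have hδk : ∀ i, ∀ k ∈ 𝒦 i, |δ k| ≤ s := by
    intro i k hk
    rw [hs, ← Real.sqrt_sq_eq_abs]
    exact Real.sqrt_le_sqrt (Finset.single_le_sum (f := fun j => δ j ^ 2) (fun j _ => sq_nonneg _) (h𝒦D i hk))
  -- bound on the perturbation sums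
  have hpert : ∀ i j, |∑ k ∈ 𝒦 i, δ k * A i k j| ≤ s * ∑ k ∈ 𝒦 i, |A i k j| := by
    intro i j
    calc |∑ k ∈ 𝒦 i, δ k * A i k j| ≤ ∑ k ∈ 𝒦 i, |δ k * A i k j| :=
          Finset.abs_sum_le_sum_abs _ _
      _ ≤ ∑ k ∈ 𝒦 i, s * |A i k j| := by
          refine Finset.sum_le_sum fun k hk => ?_
          rw [abs_mul]
          exact mul_le_mul_of_nonneg_right (hδk i k hk) (abs_nonneg _)
      _ = s * ∑ k ∈ 𝒦 i, |A i k j| := by rw [Finset.mul_sum]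
  -- key strict inequalities
  have key1 : ∀ i, s * (∑ k ∈ 𝒦 i, ∑ j, |A i k j|) <
      𝒜 i i - ∑ j ∈ Finset.univ.erase i, |𝒜 i j| := by
    intro i
    have hP : 0 ≤ ∑ k ∈ 𝒦 i, ∑ j, |A i k j| :=
      Finset.sum_nonneg fun k _ => Finset.sum_nonneg fun j _ => abs_nonneg _
    rcases hP.lt_or_eq with hP | hP
    · have hne : (𝒦 i).Nonempty := by
        rw [Finset.nonempty_iff_ne_empty]
        rintro h; rw [h] at hP; simp at hP
      calc s * (∑ k ∈ 𝒦 i, ∑ j, |A i k j|) < r * (∑ k ∈ 𝒦 i, ∑ j, |A i k j|) :=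
            (mul_lt_mul_of_pos_right hδ hP)
        _ ≤ _ := hr1 i hne
    · rw [← hP, mul_zero]
      linarith [hdd i]
  have key2 : ∀ i, s * (∑ k ∈ 𝒦 i, |A i k i|) < 𝒜 i i := by
    intro i
    have hQ : 0 ≤ ∑ k ∈ 𝒦 i, |A i k i| :=
      Finset.sum_nonneg fun k _ => abs_nonneg _
    rcases hQ.lt_or_eq with hQ | hQ
    · have hne : (𝒦 i).Nonempty := by
        rw [Finset.nonempty_iff_ne_empty]
        rintro h; rw [h] at hQ; simp at hQ
      calc s * (∑ k ∈ 𝒦 i, |A i k i|) < r * (∑ k ∈ 𝒦 i, |A i k i|) :=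
            (mul_lt_mul_of_pos_right hδ hQ)
        _ ≤ _ := hr2 i hne
    · rw [← hQ, mul_zero]; exact hpos i
  -- diagonal lower bound
  have hdiag : ∀ i, 𝒜 i i - s * (∑ k ∈ 𝒦 i, |A i k i|) ≤ Abar δ i i := by
    intro i
    rw [hAbar]
    have := hpert i i
    have h1 : -(s * ∑ k ∈ 𝒦 i, |A i k i|) ≤ ∑ k ∈ 𝒦 i, δ k * A i k i :=
      neg_le_of_abs_le this
    linarith
  -- off-diagonal upper bound
  have hoff : ∀ i, ∑ j ∈ Finset.univ.erase i, |Abar δ i j| ≤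
      (∑ j ∈ Finset.univ.erase i, |𝒜 i j|) +
        s * ∑ k ∈ 𝒦 i, ∑ j ∈ Finset.univ.erase i, |A i k j| := by
    intro i
    calc ∑ j ∈ Finset.univ.erase i, |Abar δ i j|
        ≤ ∑ j ∈ Finset.univ.erase i, (|𝒜 i j| + s * ∑ k ∈ 𝒦 i, |A i k j|) := by
          refine Finset.sum_le_sum fun j _ => ?_
          rw [hAbar]
          exact (abs_add_le _ _).trans (by linarith [hpert i j])
      _ = (∑ j ∈ Finset.univ.erase i, |𝒜 i j|) +
            s * ∑ j ∈ Finset.univ.erase i, ∑ k ∈ 𝒦 i, |A i k j| := by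
          rw [Finset.sum_add_distrib, Finset.mul_sum]
      _ = _ := by rw [Finset.sum_comm]
  -- splitting of full row sums
  have hsplit : ∀ i, ∑ k ∈ 𝒦 i, ∑ j, |A i k j| =
      (∑ k ∈ 𝒦 i, ∑ j ∈ Finset.univ.erase i, |A i k j|) + ∑ k ∈ 𝒦 i, |A i k i| := by
    intro i
    rw [← Finset.sum_add_distrib]
    refine Finset.sum_congr rfl fun k _ => ?_
    rw [← Finset.add_sum_erase _ _ (Finset.mem_univ i), add_comm]
  have hSDD : ∀ i, ∑ j ∈ Finset.univ.erase i, |Abar δ i j| < Abar δ i i := by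
    intro i
    have h1 := key1 i
    rw [hsplit i, mul_add] at h1
    have := hoff i
    have := hdiag i
    linarith
  have hPos : ∀ i, 0 < Abar δ i i := fun i => lt_of_lt_of_le (by linarith [key2 i]) (hdiag i)
  refine ⟨hSDD, hPos, ?_⟩
  intro k hk μ hμ
  set B : Matrix (Fin N) (Fin N) ℝ := Matrix.diagonal k * Abar δ with hB
  have hBij : ∀ i j, B i j = k i * Abar δ i j := by
    intro i j; rw [hB, Matrix.diagonal_mul]
  set C : Matrix (Fin N) (Fin N) ℂ := (-B).map (Complex.ofReal : ℝ → ℂ) with hC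
  -- μ is an eigenvalue of toLin' C
  have heig : Module.End.HasEigenvalue (Matrix.toLin' C) μ := by
    rw [Module.End.hasEigenvalue_iff_mem_spectrum]
    have hEq : Matrix.toLin' C = Matrix.toLinAlgEquiv' C := by
      apply LinearMap.ext; intro v
      rw [Matrix.toLin'_apply, Matrix.toLinAlgEquiv'_apply]
    rw [hEq, AlgEquiv.spectrum_eq Matrix.toLinAlgEquiv' C]
    exact hμ
  obtain ⟨i, hi⟩ := eigenvalue_mem_ball heig
  rw [Metric.mem_closedBall, dist_eq_norm] at hi
  have hnorm : ∀ j, ‖C i j‖ = |B i j| := by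
    intro j
    rw [hC, Matrix.map_apply, Complex.norm_real]
    simp [Real.norm_eq_abs]
  have hre : μ.re - (C i i).re ≤ ‖μ - C i i‖ := by
    have := Complex.abs_re_le_norm (μ - C i i)
    rw [Complex.sub_re] at this
    calc μ.re - (C i i).re ≤ |μ.re - (C i i).re| := le_abs_self _
      _ ≤ ‖μ - C i i‖ := this
  have hCii : (C i i).re = -(B i i) := by
    rw [hC]; simp [Matrix.map_apply]
  have hsum : ∑ j ∈ Finset.univ.erase i, ‖C i j‖ =
      ∑ j ∈ Finset.univ.erase i, |B i j| :=
    Finset.sum_congr rfl fun j _ => hnorm j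
  -- strict diagonal dominance of B
  have hBdd : ∑ j ∈ Finset.univ.erase i, |B i j| < B i i := by
    rw [hBij]
    calc ∑ j ∈ Finset.univ.erase i, |B i j|
        = k i * ∑ j ∈ Finset.univ.erase i, |Abar δ i j| := by
          rw [Finset.mul_sum]
          exact Finset.sum_congr rfl fun j _ => by
            rw [hBij, abs_mul, abs_of_pos (hk i)]
      _ < k i * Abar δ i i := mul_lt_mul_of_pos_left (hSDD i) (hk i)
  have : μ.re ≤ (C i i).re + ∑ j ∈ Finset.univ.erase i, ‖C i j‖ := by linarith
  rw [hCii, hsum] at this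
  linarith
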